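/- Let N ≥ 1 and let a : ℝ → ℂ^N be the ULA steering vector with entries a_m(φ) = exp(i·π·(N−1)·sin φ / 2) · exp(−i·m·π·sin φ) for m = 0,…,N−1. Then for every φ, the squared norm of the derivative satisfies ‖a'(φ)‖² = π² · cos²φ · (N³ − N) / 12. -/
import Mathlib


open Complex Real Matrix

/-- ULA steering vector with the array center as zero-phase reference:
`a_m(φ) = exp(i·π·(N−1)·sin φ / 2) · exp(−i·m·π·sin φ)` for `m = 0, …, N−1`. -/
noncomputable def steer (N : ℕ) (φ : ℝ) : Fin N → ℂ := fun m =>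
  Complex.exp (Complex.I * (Real.pi : ℂ) * ((N : ℂ) - 1) * (Real.sin φ : ℂ) / 2) *
    Complex.exp (-(Complex.I * ((m : ℕ) : ℂ) * (Real.pi : ℂ) * (Real.sin φ : ℂ)))

lemma sum_range_id_real (N : ℕ) :
    (∑ m ∈ Finset.range N, (m : ℝ)) = N * (N - 1) / 2 := by
  induction N with
  | zero => simp
  | succ n ih => rw [Finset.sum_range_succ, ih]; push_cast; ring

lemma sum_range_sq_real (N : ℕ) :
    (∑ m ∈ Finset.range N, (m : ℝ) ^ 2) = N * (N - 1) * (2 * N - 1) / 6 := by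
  induction N with
  | zero => simp
  | succ n ih => rw [Finset.sum_range_succ, ih]; push_cast; ring

lemma steer_eq (N : ℕ) (m : Fin N) (x : ℝ) :
    steer N x m =
      Complex.exp (((Real.pi * (((N : ℝ) - 1) / 2 - (m : ℝ)) * Real.sin x : ℝ) : ℂ)
        * Complex.I) := by
  unfold steer
  rw [← Complex.exp_add]
  congr 1
  push_cast
  ring

lemma steer_term (N : ℕ) (m : Fin N) (φ : ℝ) :
    Complex.normSq (deriv (fun x => steer N x m) φ) =
      Real.pi ^ 2 * Real.cos φ ^ 2 * (((N : ℝ) - 1) / 2 - (m : ℝ)) ^ 2 := by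
  set r : ℝ := Real.pi * (((N : ℝ) - 1) / 2 - (m : ℝ)) with hr
  have h1 : HasDerivAt (fun x : ℝ => ((r * Real.sin x : ℝ) : ℂ))
      ((r * Real.cos φ : ℝ) : ℂ) φ :=
    ((Real.hasDerivAt_sin φ).const_mul r).ofReal_comp
  have h2 : HasDerivAt (fun x : ℝ => ((r * Real.sin x : ℝ) : ℂ) * Complex.I)
      (((r * Real.cos φ : ℝ) : ℂ) * Complex.I) φ := h1.mul_const _
  have h3 : HasDerivAt (fun x : ℝ => Complex.exp (((r * Real.sin x : ℝ) : ℂ) * Complex.I))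
      (Complex.exp (((r * Real.sin φ : ℝ) : ℂ) * Complex.I)
        * (((r * Real.cos φ : ℝ) : ℂ) * Complex.I)) φ := h2.cexp
  have hfun : (fun x => steer N x m)
      = fun x => Complex.exp (((r * Real.sin x : ℝ) : ℂ) * Complex.I) := by
    funext x; exact steer_eq N m x
  rw [hfun, h3.deriv]
  have habs : Complex.normSq (Complex.exp (((r * Real.sin φ : ℝ) : ℂ) * Complex.I)) = 1 := by
    rw [Complex.normSq_eq_norm_sq, Complex.norm_exp]
    simp
  rw [Complex.normSq_mul, habs, one_mul, Complex.normSq_mul, Complex.normSq_I,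
    Complex.normSq_ofReal, hr]
  ring

/-- The squared norm of the componentwise derivative of the steering vector:
`‖a'(φ)‖² = π² · cos²φ · (N³ − N) / 12`. -/
theorem steer_deriv_norm_sq (N : ℕ) (hN : 1 ≤ N) (φ : ℝ) :
    (∑ m : Fin N, Complex.normSq (deriv (fun x => steer N x m) φ)) =
      Real.pi ^ 2 * Real.cos φ ^ 2 * ((N : ℝ) ^ 3 - (N : ℝ)) / 12 := by
  have hsum : (∑ m : Fin N, (((N : ℝ) - 1) / 2 - (m : ℝ)) ^ 2)
      = ((N : ℝ) ^ 3 - (N : ℝ)) / 12 := by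
    rw [Fin.sum_univ_eq_sum_range (fun m => (((N : ℝ) - 1) / 2 - (m : ℝ)) ^ 2)]
    have expand : ∀ m ∈ Finset.range N, (((N : ℝ) - 1) / 2 - (m : ℝ)) ^ 2
        = (((N : ℝ) - 1) / 2) ^ 2 - ((N : ℝ) - 1) * (m : ℝ) + (m : ℝ) ^ 2 := by
      intro m _; ring
    rw [Finset.sum_congr rfl expand]
    rw [Finset.sum_add_distrib, Finset.sum_sub_distrib, Finset.sum_const,
      ← Finset.mul_sum, sum_range_id_real, sum_range_sq_real, Finset.card_range]
    push_cast
    ring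
  calc (∑ m : Fin N, Complex.normSq (deriv (fun x => steer N x m) φ))
      = ∑ m : Fin N, Real.pi ^ 2 * Real.cos φ ^ 2 * (((N : ℝ) - 1) / 2 - (m : ℝ)) ^ 2 :=
        Finset.sum_congr rfl (fun m _ => steer_term N m φ)
    _ = Real.pi ^ 2 * Real.cos φ ^ 2 * ∑ m : Fin N, (((N : ℝ) - 1) / 2 - (m : ℝ)) ^ 2 := by
        rw [Finset.mul_sum]
    _ = Real.pi ^ 2 * Real.cos φ ^ 2 * (((N : ℝ) ^ 3 - (N : ℝ)) / 12) := by rw [hsum]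
    _ = Real.pi ^ 2 * Real.cos φ ^ 2 * ((N : ℝ) ^ 3 - (N : ℝ)) / 12 := by ring
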